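/- Let G be a loopless multigraph on a finite vertex set V, let t ≥ 0 be an integer, and let H be the t-core of G. If μ_H(u,v) ≤ t+1 for all u,v ∈ V, and the simple graph on V in which u and v are adjacent exactly when μ_H(u,v) = t+1 is acyclic, then χ'(G) ≤ Δ(G) + t. -/

import Mathlib

structure Multigraph (V : Type*) where
  mu : V → V → ℕ
  symm : ∀ u v, mu u v = mu v u
  loopless : ∀ v, mu v v = 0

namespace Multigraph

variable {V : Type*} [Fintype V]

/-- The degree of a vertex: number of incident edges. -/
def deg (G : Multigraph V) (v : V) : ℕ := ∑ u, G.mu v u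

/-- The maximum degree Δ(G). -/
def maxDeg (G : Multigraph V) : ℕ := Finset.univ.sup (deg G)

/-- The local multiplicity μ_G(v). -/
def locMult (G : Multigraph V) (v : V) : ℕ := Finset.univ.sup (G.mu v)

end Multigraph

namespace Multigraph

variable {V : Type*} [Fintype V]

/-- A proper k-edge-colouring: a decomposition of μ_G into k symmetric {0,1}-valued
matchings. -/
def IsEdgeColoring (G : Multigraph V) (k : ℕ) (M : Fin k → V → V → ℕ) : Prop :=
  (∀ i u v, M i u v = M i v u) ∧
  (∀ i u v, M i u v ≤ 1) ∧
  (∀ i v, ∑ u, M i v u ≤ 1) ∧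
  (∀ u v, ∑ i, M i u v = G.mu u v)

/-- The chromatic index χ'(G): least k admitting a proper k-edge-colouring. -/
noncomputable def chromaticIndex (G : Multigraph V) : ℕ :=
  sInf { k | ∃ M, IsEdgeColoring G k M }

end Multigraph

namespace Multigraph

variable {V : Type*} [Fintype V]

/-- The t-core of G : induced submultigraph on the vertices v with
d_G(v) + μ_G(v) > Δ(G) + t. -/
def tCore (G : Multigraph V) (t : ℕ) : Multigraph V where
  mu u v := if (maxDeg G + t < deg G u + locMult G u) ∧
               (maxDeg G + t < deg G v + locMult G v) then G.mu u v else 0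
  symm u v := by
    try dsimp only
    by_cases h : (maxDeg G + t < deg G u + locMult G u) ∧
        (maxDeg G + t < deg G v + locMult G v)
    · rw [if_pos h, if_pos ⟨h.2, h.1⟩, G.symm]
    · rw [if_neg h, if_neg fun h' => h ⟨h'.2, h'.1⟩]
  loopless v := by
    try dsimp only
    split <;> simp [G.loopless]

end Multigraph

set_option linter.unusedSectionVars false
set_option maxHeartbeats 1000000

namespace MGAux
open Multigraph Finset

variable {V : Type*} [Fintype V] [DecidableEq V]

lemma mg_ext {G H : Multigraph V} (h : ∀ u v, G.mu u v = H.mu u v) : G = H := by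
  cases G; cases H
  simp only [Multigraph.mk.injEq]
  funext u v; exact h u v

def del (G : Multigraph V) (x y : V) : Multigraph V where
  mu u v := G.mu u v - (if (u = x ∧ v = y) ∨ (u = y ∧ v = x) then 1 else 0)
  symm u v := by
    rw [G.symm]
    have h : (u = x ∧ v = y ∨ u = y ∧ v = x) ↔ (v = x ∧ u = y ∨ v = y ∧ u = x) := by tauto
    simp only [h]
  loopless v := by simp [G.loopless]

lemma mu_del (G : Multigraph V) (x y u v : V) :
    (del G x y).mu u v = G.mu u v - (if (u = x ∧ v = y) ∨ (u = y ∧ v = x) then 1 else 0) := rfl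

lemma mu_del_le (G : Multigraph V) (x y u v : V) : (del G x y).mu u v ≤ G.mu u v :=
  Nat.sub_le _ _

lemma mu_del_pair (G : Multigraph V) (x y : V) : (del G x y).mu x y = G.mu x y - 1 := by
  by_cases h : x = y
  · subst h; simp [mu_del, G.loopless]
  · simp [mu_del, h]

lemma mu_del_ne (G : Multigraph V) {x y u v : V}
    (h : ¬((u = x ∧ v = y) ∨ (u = y ∧ v = x))) : (del G x y).mu u v = G.mu u v := by
  simp [mu_del, h]

lemma del_comm (G : Multigraph V) (x y u v : V) :
    del (del G x y) u v = del (del G u v) x y := by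
  apply mg_ext; intro a b; simp only [mu_del]; omega

lemma deg_del_le (G : Multigraph V) (x y v : V) : deg (del G x y) v ≤ deg G v :=
  Finset.sum_le_sum fun u _ => mu_del_le G x y v u

lemma locMult_del_le (G : Multigraph V) (x y v : V) : locMult (del G x y) v ≤ locMult G v := by
  apply Finset.sup_mono_fun; intro u _; exact mu_del_le G x y v u

lemma deg_del_of_ne (G : Multigraph V) {x y : V} (v : V) (hvx : v ≠ x) (hvy : v ≠ y) :
    deg (del G x y) v = deg G v := by
  apply Finset.sum_congr rfl; intro u _
  apply mu_del_ne
  rintro (⟨h1, h2⟩ | ⟨h1, h2⟩) <;> [exact hvx h1; exact hvy h1]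

lemma deg_del_left (G : Multigraph V) {x y : V} (hxy : x ≠ y) (hmu : 1 ≤ G.mu x y) :
    deg (del G x y) x = deg G x - 1 := by
  have h1 : ∀ u ∈ Finset.univ.erase y, (del G x y).mu x u = G.mu x u := by
    intro u hu
    apply mu_del_ne
    rintro (⟨h1, h2⟩ | ⟨h1, h2⟩)
    · exact (Finset.mem_erase.1 hu).1 h2
    · exact hxy h1
  have e1 : deg G x = (∑ u ∈ Finset.univ.erase y, G.mu x u) + G.mu x y :=
    (Finset.sum_erase_add _ _ (Finset.mem_univ y)).symm
  have e2 : deg (del G x y) x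
      = (∑ u ∈ Finset.univ.erase y, (del G x y).mu x u) + (del G x y).mu x y :=
    (Finset.sum_erase_add _ _ (Finset.mem_univ y)).symm
  have h1' : (∑ u ∈ Finset.univ.erase y, (del G x y).mu x u)
      = ∑ u ∈ Finset.univ.erase y, G.mu x u := Finset.sum_congr rfl h1
  rw [h1', mu_del_pair] at e2
  rw [e2, e1]
  omega

lemma deg_del_right (G : Multigraph V) {x y : V} (hxy : x ≠ y) (hmu : 1 ≤ G.mu x y) :
    deg (del G x y) y = deg G y - 1 := by
  have : del G x y = del G y x := by
    apply mg_ext; intro a b; simp only [mu_del]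
    have h : (a = x ∧ b = y ∨ a = y ∧ b = x) ↔ (a = y ∧ b = x ∨ a = x ∧ b = y) := by tauto
    simp only [h]
  rw [this]
  exact deg_del_left G hxy.symm (by rwa [G.symm])

def size (G : Multigraph V) : ℕ := ∑ p : V × V, G.mu p.1 p.2

lemma size_del_lt (G : Multigraph V) {x y : V} (hmu : 1 ≤ G.mu x y) :
    size (del G x y) < size G := by
  have hxy : x ≠ y := by intro h; subst h; rw [G.loopless] at hmu; omega
  apply Finset.sum_lt_sum (fun p _ => mu_del_le G x y p.1 p.2)
  refine ⟨(x, y), Finset.mem_univ _, ?_⟩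
  simp only [mu_del_pair]; omega

end MGAux

namespace MGAux
open Multigraph Finset

variable {V : Type*} [Fintype V] [DecidableEq V]

structure Col (G : Multigraph V) (k : ℕ) where
  M : Fin k → V → V → ℕ
  symm : ∀ i u v, M i u v = M i v u
  le_one : ∀ i u v, M i u v ≤ 1
  matching : ∀ i v, ∑ u, M i v u ≤ 1
  total : ∀ u v, ∑ i, M i u v = G.mu u v

variable {G : Multigraph V} {k : ℕ}

lemma Col.diag (φ : Col G k) (i : Fin k) (v : V) : φ.M i v v = 0 := by
  have h := φ.total v v
  rw [G.loopless] at h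
  exact Finset.sum_eq_zero_iff.1 h i (Finset.mem_univ i)

lemma Col.le_mu (φ : Col G k) (i : Fin k) (u v : V) : φ.M i u v ≤ G.mu u v := by
  rw [← φ.total u v]
  exact Finset.single_le_sum (f := fun j => φ.M j u v) (fun j _ => Nat.zero_le _) (Finset.mem_univ i)

def Col.free (φ : Col G k) (c : Fin k) (v : V) : Prop := ∑ u, φ.M c v u = 0

lemma Col.free_iff (φ : Col G k) (c : Fin k) (v : V) :
    φ.free c v ↔ ∀ u, φ.M c v u = 0 := by
  unfold Col.free
  rw [Finset.sum_eq_zero_iff]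
  exact ⟨fun h u => h u (Finset.mem_univ u), fun h u _ => h u⟩

lemma Col.not_free (φ : Col G k) {c : Fin k} {v : V} (h : ¬ φ.free c v) :
    ∃ u, φ.M c v u = 1 := by
  rw [Col.free_iff] at h
  push_neg at h
  obtain ⟨u, hu⟩ := h
  exact ⟨u, by have := φ.le_one c v u; omega⟩

lemma Col.not_free_of_M (φ : Col G k) {c : Fin k} {v u : V} (h : φ.M c v u = 1) :
    ¬ φ.free c v := by
  rw [Col.free_iff]
  push_neg
  exact ⟨u, by omega⟩

lemma Col.sum_eq_one (φ : Col G k) {c : Fin k} {v u : V} (h : φ.M c v u = 1) :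
    ∑ w, φ.M c v w = 1 := by
  have h1 := φ.matching c v
  have h2 : φ.M c v u ≤ ∑ w, φ.M c v w :=
    Finset.single_le_sum (f := fun w => φ.M c v w) (fun j _ => Nat.zero_le _) (Finset.mem_univ u)
  omega

def Col.freeSet (φ : Col G k) (v : V) : Finset (Fin k) :=
  Finset.univ.filter (fun c => ∑ u, φ.M c v u = 0)

lemma Col.mem_freeSet (φ : Col G k) (c : Fin k) (v : V) :
    c ∈ φ.freeSet v ↔ φ.free c v := by
  simp [Col.freeSet, Col.free]

lemma Col.card_freeSet (φ : Col G k) (v : V) : k ≤ deg G v + (φ.freeSet v).card := by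
  classical
  set N := Finset.univ.filter (fun c : Fin k => ¬ (∑ u, φ.M c v u = 0)) with hN
  have hpart : (φ.freeSet v).card + N.card = k := by
    rw [Col.freeSet, hN, Finset.card_filter_add_card_filter_not]
    simp
  have h1 : ∀ c ∈ N, 1 ≤ ∑ u, φ.M c v u := by
    intro c hc
    rw [hN, Finset.mem_filter] at hc
    omega
  have h2 : N.card * 1 ≤ ∑ c ∈ N, ∑ u, φ.M c v u := by
    simpa using Finset.card_nsmul_le_sum N _ 1 h1
  have h3 : ∑ c ∈ N, ∑ u, φ.M c v u ≤ ∑ c, ∑ u, φ.M c v u :=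
    Finset.sum_le_sum_of_subset (Finset.subset_univ N)
  have h4 : (∑ c, ∑ u, φ.M c v u) = deg G v := by
    rw [Finset.sum_comm]
    exact Finset.sum_congr rfl fun u _ => φ.total v u
  omega

lemma Col.exists_free (φ : Col G k) (v : V) (h : deg G v < k) : ∃ c, φ.free c v := by
  have := φ.card_freeSet v
  have hne : (φ.freeSet v).Nonempty := by
    rw [← Finset.card_pos]; omega
  obtain ⟨c, hc⟩ := hne
  exact ⟨c, (φ.mem_freeSet c v).1 hc⟩

end MGAux

namespace MGAux
open Multigraph Finset

variable {V : Type*} [Fintype V] [DecidableEq V]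
variable {G : Multigraph V} {k : ℕ}

lemma sum_pair_ind {x y : V} (hxy : x ≠ y) (v : V) :
    (∑ u, (if (v = x ∧ u = y) ∨ (v = y ∧ u = x) then (1:ℕ) else 0))
      = if v = x ∨ v = y then 1 else 0 := by
  by_cases hvx : v = x
  · rw [if_pos (Or.inl hvx)]
    have h : ∀ u : V, ((v = x ∧ u = y) ∨ (v = y ∧ u = x)) ↔ u = y := by
      intro u
      constructor
      · rintro (⟨-, h⟩ | ⟨h, -⟩)
        · exact h
        · exact absurd (hvx.symm.trans h) hxy
      · exact fun h => Or.inl ⟨hvx, h⟩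
    simp only [h]
    simp [Finset.filter_eq']
  · by_cases hvy : v = y
    · rw [if_pos (Or.inr hvy)]
      have h : ∀ u : V, ((v = x ∧ u = y) ∨ (v = y ∧ u = x)) ↔ u = x := by
        intro u
        constructor
        · rintro (⟨h, -⟩ | ⟨-, h⟩)
          · exact absurd (hvy.symm.trans h).symm hxy
          · exact h
        · exact fun h => Or.inr ⟨hvy, h⟩
      simp only [h]
      simp [Finset.filter_eq']
    · have h : ∀ u : V, ((v = x ∧ u = y) ∨ (v = y ∧ u = x)) ↔ False := by
        intro u; simp [hvx, hvy]
      simp [h, hvx, hvy]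

def Col.colorEdge {x y : V} (φ : Col (del G x y) k) (c : Fin k) (hxy : x ≠ y)
    (hmu : 1 ≤ G.mu x y) (hfx : φ.free c x) (hfy : φ.free c y) : Col G k where
  M i u v := φ.M i u v + if i = c ∧ ((u = x ∧ v = y) ∨ (u = y ∧ v = x)) then 1 else 0
  symm i u v := by
    rw [φ.symm]
    have h : ((u = x ∧ v = y) ∨ (u = y ∧ v = x)) ↔ ((v = x ∧ u = y) ∨ (v = y ∧ u = x)) := by
      tauto
    simp only [h]
  le_one i u v := by
    by_cases h : i = c ∧ ((u = x ∧ v = y) ∨ (u = y ∧ v = x))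
    · obtain ⟨hic, hp⟩ := h
      have hz : φ.M i u v = 0 := by
        rcases hp with ⟨h1, h2⟩ | ⟨h1, h2⟩
        · rw [h1, h2, hic]; exact (φ.free_iff c x).1 hfx y
        · rw [h1, h2, hic]; exact (φ.free_iff c y).1 hfy x
      rw [hz, if_pos ⟨hic, hp⟩]
    · rw [if_neg h]
      have := φ.le_one i u v
      omega
  matching i v := by
    rw [Finset.sum_add_distrib]
    by_cases hic : i = c
    · have h1 : (∑ u, if i = c ∧ ((v = x ∧ u = y) ∨ (v = y ∧ u = x)) then (1:ℕ) else 0)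
          = if v = x ∨ v = y then 1 else 0 := by
        simp only [hic, true_and]
        exact sum_pair_ind hxy v
      rw [h1]
      by_cases hvx : v = x
      · have h2 : (∑ u, φ.M i v u) = 0 := by rw [hvx, hic]; exact hfx
        rw [h2, if_pos (Or.inl hvx)]
      · by_cases hvy : v = y
        · have h2 : (∑ u, φ.M i v u) = 0 := by rw [hvy, hic]; exact hfy
          rw [h2, if_pos (Or.inr hvy)]
        · have := φ.matching i v
          simp only [hvx, hvy, or_self, if_false]
          omega
    · have h1 : (∑ u, if i = c ∧ ((v = x ∧ u = y) ∨ (v = y ∧ u = x)) then (1:ℕ) else 0) = 0 := by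
        apply Finset.sum_eq_zero
        intro u _
        simp [hic]
      rw [h1]
      have := φ.matching i v
      omega
  total u v := by
    rw [Finset.sum_add_distrib]
    by_cases hp : (u = x ∧ v = y) ∨ (u = y ∧ v = x)
    · have h1 : (∑ i : Fin k, if i = c ∧ ((u = x ∧ v = y) ∨ (u = y ∧ v = x)) then (1:ℕ) else 0)
          = 1 := by
        simp only [hp, and_true]
        simp [Finset.filter_eq']
      have h2 : (del G x y).mu u v = G.mu u v - 1 := by
        rcases hp with ⟨h1, h2⟩ | ⟨h1, h2⟩
        · rw [h1, h2]; exact mu_del_pair G x y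
        · rw [h1, h2]
          rw [show del G x y = del G y x from
            mg_ext fun a b => by
              simp only [mu_del]
              simp only [show ((a = x ∧ b = y) ∨ (a = y ∧ b = x)) ↔ ((a = y ∧ b = x) ∨ (a = x ∧ b = y))
                from by tauto]]
          exact mu_del_pair G y x
      have h3 : 1 ≤ G.mu u v := by
        rcases hp with ⟨h1, h2⟩ | ⟨h1, h2⟩
        · rw [h1, h2]; exact hmu
        · rw [h1, h2, G.symm]; exact hmu
      rw [h1, φ.total, h2]
      omega
    · have h1 : (∑ i : Fin k, if i = c ∧ ((u = x ∧ v = y) ∨ (u = y ∧ v = x)) then (1:ℕ) else 0)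
          = 0 := by
        apply Finset.sum_eq_zero
        intro i _
        simp [hp]
      rw [h1, φ.total, mu_del_ne G hp]
      omega

def Col.uncolorEdge (φ : Col G k) (c : Fin k) (x y : V) (h : φ.M c x y = 1) :
    Col (del G x y) k where
  M i u v := φ.M i u v - if i = c ∧ ((u = x ∧ v = y) ∨ (u = y ∧ v = x)) then 1 else 0
  symm i u v := by
    rw [φ.symm]
    have hh : ((u = x ∧ v = y) ∨ (u = y ∧ v = x)) ↔ ((v = x ∧ u = y) ∨ (v = y ∧ u = x)) := by
      tauto
    simp only [hh]
  le_one i u v := le_trans (Nat.sub_le _ _) (φ.le_one i u v)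
  matching i v := le_trans (Finset.sum_le_sum fun u _ => Nat.sub_le _ _) (φ.matching i v)
  total u v := by
    have hsplit : ∀ f : Fin k → ℕ, (∑ i, f i) = f c + ∑ i ∈ Finset.univ.erase c, f i :=
      fun f => (Finset.add_sum_erase _ f (Finset.mem_univ c)).symm
    rw [hsplit]
    have h2 : ∀ i ∈ Finset.univ.erase c,
        (φ.M i u v - if i = c ∧ ((u = x ∧ v = y) ∨ (u = y ∧ v = x)) then 1 else 0)
          = φ.M i u v := by
      intro i hi
      simp [(Finset.mem_erase.1 hi).1]
    rw [Finset.sum_congr rfl h2]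
    have h5 := φ.total u v
    rw [hsplit (fun i => φ.M i u v)] at h5
    simp only [true_and, if_pos rfl]
    by_cases hp : (u = x ∧ v = y) ∨ (u = y ∧ v = x)
    · have hM1 : φ.M c u v = 1 := by
        rcases hp with ⟨h1, h2⟩ | ⟨h1, h2⟩
        · rw [h1, h2]; exact h
        · rw [h1, h2, φ.symm]; exact h
      have h4 : (del G x y).mu u v = G.mu u v - 1 := by
        rcases hp with ⟨h1, h2⟩ | ⟨h1, h2⟩
        · rw [h1, h2]; exact mu_del_pair G x y
        · rw [h1, h2]
          rw [show del G x y = del G y x from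
            mg_ext fun a b => by
              simp only [mu_del]
              simp only [show ((a = x ∧ b = y) ∨ (a = y ∧ b = x)) ↔ ((a = y ∧ b = x) ∨ (a = x ∧ b = y))
                from by tauto]]
          exact mu_del_pair G y x
      rw [if_pos hp, hM1, h4]
      omega
    · rw [if_neg hp, mu_del_ne G hp]
      omega

def Col.copy (φ : Col G k) {H : Multigraph V} (h : G = H) : Col H k where
  M := φ.M
  symm := φ.symm
  le_one := φ.le_one
  matching := φ.matching
  total := fun u v => h ▸ φ.total u v

lemma Col.copy_M (φ : Col G k) {H : Multigraph V} (h : G = H) : (φ.copy h).M = φ.M := rfl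

end MGAux

namespace MGAux
open Multigraph Finset

variable {V : Type*} [Fintype V] [DecidableEq V]
variable {G : Multigraph V} {k : ℕ}

lemma ne_of_mu_pos {x y : V} (h : 1 ≤ G.mu x y) : x ≠ y := by
  intro he; rw [he, G.loopless] at h; omega

lemma ne_of_M_one {φ : Col G k} {c : Fin k} {x y : V} (h : φ.M c x y = 1) : x ≠ y := by
  intro he; rw [he, φ.diag] at h; omega

lemma mu_pos_of_M_one {x w : V} {φ : Col (del G x w) k} {c : Fin k} {u v : V}
    (h : φ.M c u v = 1) : 1 ≤ G.mu u v := by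
  have h1 := φ.le_mu c u v
  have h2 := mu_del_le G x w u v
  omega

lemma rotate_step {x w z : V} {c : Fin k} (φ : Col (del G x w) k)
    (hmuw : 1 ≤ G.mu x w) (hM : φ.M c x z = 1) (hfw : φ.free c w) :
    ∃ ψ : Col (del G x z) k,
      (∀ c' u v, x ≠ u → x ≠ v → ψ.M c' u v = φ.M c' u v) ∧
      (∀ c' u, c' ≠ c → ψ.M c' x u = φ.M c' x u) ∧
      (∀ c', (ψ.free c' x ↔ φ.free c' x)) := by
  have hxz : x ≠ z := ne_of_M_one hM
  have hxw : x ≠ w := ne_of_mu_pos hmuw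
  by_cases hzw : z = w
  · subst hzw
    exact ⟨φ, fun _ _ _ _ _ => rfl, fun _ _ _ => rfl, fun _ => Iff.rfl⟩
  · have hzw' : w ≠ z := fun h => hzw h.symm
    set φ₂ := φ.uncolorEdge c x z hM with hφ₂
    set φ₃ := φ₂.copy (del_comm G x w x z) with hφ₃
    have hmu2 : 1 ≤ (del G x z).mu x w := by
      rw [mu_del_ne G (by tauto)]
      exact hmuw
    have hall : ∀ u, u ≠ z → φ.M c x u = 0 := by
      have hs := φ.sum_eq_one hM
      have := (Finset.add_sum_erase _ (fun u => φ.M c x u) (Finset.mem_univ z)).symm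
      rw [this, hM] at hs
      intro u hu
      have h0 : ∑ u ∈ Finset.univ.erase z, φ.M c x u = 0 := by omega
      exact Finset.sum_eq_zero_iff.1 h0 u (Finset.mem_erase.2 ⟨hu, Finset.mem_univ u⟩)
    have hφ₂M : ∀ c' u v, φ₂.M c' u v
        = φ.M c' u v - (if c' = c ∧ ((u = x ∧ v = z) ∨ (u = z ∧ v = x)) then 1 else 0) :=
      fun _ _ _ => rfl
    have hfx3 : φ₃.free c x := by
      rw [Col.free_iff]
      intro u
      rw [show φ₃.M = φ₂.M from rfl, hφ₂M]
      by_cases hu : u = z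
      · rw [hu, hM]
        simp
      · rw [hall u hu]
        simp
    have hfw3 : φ₃.free c w := by
      rw [Col.free_iff]
      intro u
      rw [show φ₃.M = φ₂.M from rfl, hφ₂M]
      have := (φ.free_iff c w).1 hfw u
      omega
    refine ⟨φ₃.colorEdge c hxw hmu2 hfx3 hfw3, ?_, ?_, ?_⟩
    · intro c' u v hu hv
      show φ₂.M c' u v + _ = φ.M c' u v
      rw [hφ₂M]
      rw [if_neg (by tauto), if_neg (by tauto)]
      omega
    · intro c' u hc'
      show φ₂.M c' x u + _ = φ.M c' x u
      rw [hφ₂M]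
      rw [if_neg (by tauto), if_neg (by tauto)]
      omega
    · intro c'
      by_cases hc' : c' = c
      · subst hc'
        have hnf : ¬ φ.free c' x := φ.not_free_of_M hM
        have hMw : (φ₃.colorEdge c' hxw hmu2 hfx3 hfw3).M c' x w = 1 := by
          show φ₂.M c' x w + _ = 1
          rw [hφ₂M]
          rw [if_neg (by tauto), if_pos (by tauto)]
          have h0 : φ.M c' x w = 0 := by
            rw [φ.symm]
            exact (φ.free_iff _ _).1 hfw x
          omega
        exact iff_of_false ((φ₃.colorEdge c' hxw hmu2 hfx3 hfw3).not_free_of_M hMw) hnf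
      · have heq : ∀ u, (φ₃.colorEdge c hxw hmu2 hfx3 hfw3).M c' x u = φ.M c' x u := by
          intro u
          show φ₂.M c' x u + _ = φ.M c' x u
          rw [hφ₂M]
          rw [if_neg (by tauto), if_neg (by tauto)]
          omega
        unfold Col.free
        rw [Finset.sum_congr rfl (fun u _ => heq u)]

def IsFan (x w : V) (φ : Col (del G x w) k) (n : ℕ) (s : Fin n → V × Fin k) : Prop :=
  ∀ i : Fin n, φ.M (s i).2 x (s i).1 = 1 ∧
    (φ.free (s i).2 w ∨ ∃ j : Fin n, j < i ∧ φ.free (s i).2 (s j).1) ∧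
    (∀ j : Fin n, j < i → (s j).2 ≠ (s i).2)

lemma rot {x w : V} {φ : Col (del G x w) k} (hmuw : 1 ≤ G.mu x w) {n : ℕ}
    {s : Fin n → V × Fin k} (hfan : IsFan x w φ n s) (i : Fin n) :
    ∃ ψ : Col (del G x (s i).1) k,
      (∀ c u v, x ≠ u → x ≠ v → ψ.M c u v = φ.M c u v) ∧
      (∀ c u, (∀ j : Fin n, j ≤ i → c ≠ (s j).2) → ψ.M c x u = φ.M c x u) ∧
      (∀ c, (ψ.free c x ↔ φ.free c x)) := by
  suffices h : ∀ m : ℕ, ∀ i : Fin n, i.val ≤ m → ∃ ψ : Col (del G x (s i).1) k,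
      (∀ c u v, x ≠ u → x ≠ v → ψ.M c u v = φ.M c u v) ∧
      (∀ c u, (∀ j : Fin n, j ≤ i → c ≠ (s j).2) → ψ.M c x u = φ.M c x u) ∧
      (∀ c, (ψ.free c x ↔ φ.free c x)) by
    exact h i.val i le_rfl
  intro m
  induction m with
  | zero =>
    intro i hi
    rcases (hfan i).2.1 with hw | ⟨j, hj, _⟩
    · obtain ⟨ψ, hA, hB, hC⟩ := rotate_step φ hmuw (hfan i).1 hw
      exact ⟨ψ, hA, fun c u hc => hB c u (hc i le_rfl), hC⟩
    · exfalso
      have := Fin.lt_def.1 hj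
      omega
  | succ m IH =>
    intro i hi
    rcases (hfan i).2.1 with hw | ⟨j, hj, hfr⟩
    · obtain ⟨ψ, hA, hB, hC⟩ := rotate_step φ hmuw (hfan i).1 hw
      exact ⟨ψ, hA, fun c u hc => hB c u (hc i le_rfl), hC⟩
    · have hjm : j.val ≤ m := by
        have := Fin.lt_def.1 hj
        omega
      obtain ⟨ψj, hA, hB, hC⟩ := IH j hjm
      have hxzj : x ≠ (s j).1 := ne_of_M_one (hfan j).1
      have hxzi : x ≠ (s i).1 := ne_of_M_one (hfan i).1
      have hcslots : ∀ j' : Fin n, j' ≤ j → (s i).2 ≠ (s j').2 := fun j' hj' =>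
        Ne.symm ((hfan i).2.2 j' (lt_of_le_of_lt hj' hj))
      have h1 : ψj.M (s i).2 x (s i).1 = 1 := by
        rw [hB _ _ hcslots]
        exact (hfan i).1
      have h2 : ψj.free (s i).2 (s j).1 := by
        rw [Col.free_iff]
        intro u
        by_cases hux : u = x
        · rw [hux, ψj.symm, hB _ _ hcslots, φ.symm]
          exact (φ.free_iff _ _).1 hfr x
        · rw [hA _ _ _ hxzj (fun h => hux h.symm)]
          exact (φ.free_iff _ _).1 hfr u
      have hmu_j : 1 ≤ G.mu x (s j).1 := mu_pos_of_M_one (hfan j).1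
      obtain ⟨ψ, hA2, hB2, hC2⟩ := rotate_step ψj hmu_j h1 h2
      refine ⟨ψ, ?_, ?_, fun c => (hC2 c).trans (hC c)⟩
      · intro c u v hu hv
        rw [hA2 c u v hu hv, hA c u v hu hv]
      · intro c u hc
        rw [hB2 c u (hc i le_rfl), hB c u
          (fun j' hj' => hc j' (le_of_lt (lt_of_le_of_lt hj' hj)))]

lemma extend_hole {x w : V} (φ : Col (del G x w) k) (hmuw : 1 ≤ G.mu x w) {γ : Fin k}
    (hx : φ.free γ x) (hw : φ.free γ w) : Nonempty (Col G k) :=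
  ⟨φ.colorEdge γ (ne_of_mu_pos hmuw) hmuw hx hw⟩

lemma extend_fan {x w : V} {φ : Col (del G x w) k} (hmuw : 1 ≤ G.mu x w) {n : ℕ}
    {s : Fin n → V × Fin k} (hfan : IsFan x w φ n s) (i : Fin n) {γ : Fin k}
    (hx : φ.free γ x) (hz : φ.free γ (s i).1) : Nonempty (Col G k) := by
  obtain ⟨ψ, hA, hB, hC⟩ := rot hmuw hfan i
  have hslot : ∀ j : Fin n, j ≤ i → γ ≠ (s j).2 := by
    intro j _ he
    exact (φ.not_free_of_M (hfan j).1) (he ▸ hx)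
  have hxzi : x ≠ (s i).1 := ne_of_M_one (hfan i).1
  have hψx : ψ.free γ x := (hC γ).2 hx
  have hψz : ψ.free γ (s i).1 := by
    rw [Col.free_iff]
    intro u
    by_cases hux : u = x
    · rw [hux, ψ.symm, hB _ _ hslot, φ.symm]
      exact (φ.free_iff _ _).1 hz x
    · rw [hA _ _ _ hxzi (fun h => hux h.symm)]
      exact (φ.free_iff _ _).1 hz u
  exact ⟨ψ.colorEdge γ hxzi (mu_pos_of_M_one (hfan i).1) hψx hψz⟩

end MGAux

namespace MGAux
open Multigraph Finset

variable {V : Type*} [Fintype V] [DecidableEq V]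
variable {G : Multigraph V} {k : ℕ}

def KG (φ : Col G k) (α γ : Fin k) : SimpleGraph V where
  Adj u v := u ≠ v ∧ 0 < φ.M α u v + φ.M γ u v
  symm := by
    constructor
    intro u v ⟨h1, h2⟩
    refine ⟨h1.symm, ?_⟩
    rw [φ.symm α v u, φ.symm γ v u]
    exact h2
  loopless := ⟨fun v hv => hv.1 rfl⟩

lemma kempe_zero {φ : Col G k} {α γ : Fin k} {S : Set V}
    (hcl : ∀ u v, u ∈ S → (KG φ α γ).Adj u v → v ∈ S) :
    ∀ u v, u ∈ S → v ∉ S → φ.M α u v = 0 ∧ φ.M γ u v = 0 := by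
  intro u v hu hv
  by_contra hc
  have hne : u ≠ v := fun h => hv (h ▸ hu)
  have hadj : (KG φ α γ).Adj u v := show u ≠ v ∧ 0 < φ.M α u v + φ.M γ u v from ⟨hne, by omega⟩
  exact hv (hcl u v hu hadj)

lemma kempe_swap (φ : Col G k) (α γ : Fin k) (S : Set V)
    (hcl : ∀ u v, u ∈ S → (KG φ α γ).Adj u v → v ∈ S) :
    ∃ φ' : Col G k,
      (∀ c u v, c ≠ α → c ≠ γ → φ'.M c u v = φ.M c u v) ∧
      (∀ c u v, u ∉ S → φ'.M c u v = φ.M c u v) ∧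
      (∀ v, v ∉ S → ∀ c, ((∑ u, φ'.M c v u) = ∑ u, φ.M c v u)) ∧
      (∀ v, v ∈ S → ((∑ u, φ'.M α v u) = ∑ u, φ.M γ v u)
        ∧ ((∑ u, φ'.M γ v u) = ∑ u, φ.M α v u)
        ∧ ∀ c, c ≠ α → c ≠ γ → ((∑ u, φ'.M c v u) = ∑ u, φ.M c v u)) := by
  classical
  have hz := kempe_zero hcl
  set σ := Equiv.swap α γ with hσ
  refine ⟨⟨fun c u v => φ.M (if u ∈ S ∧ v ∈ S then σ c else c) u v, ?_, ?_, ?_, ?_⟩, ?_, ?_, ?_, ?_⟩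
  · intro i u v
    have hcomm : (u ∈ S ∧ v ∈ S) ↔ (v ∈ S ∧ u ∈ S) := and_comm
    by_cases h : u ∈ S ∧ v ∈ S
    · rw [if_pos h, if_pos (hcomm.1 h), φ.symm]
    · rw [if_neg h, if_neg (fun hh => h (hcomm.2 hh)), φ.symm]
  · intro i u v
    exact φ.le_one _ u v
  · -- matching
    intro i v
    by_cases hv : v ∈ S
    · -- entries with u ∉ S vanish for colors α, γ and σ-images
      by_cases hi : i = α ∨ i = γ
      · have hsum : ∀ u, φ.M (if v ∈ S ∧ u ∈ S then σ i else i) v u = φ.M (σ i) v u := by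
          intro u
          by_cases hu : u ∈ S
          · rw [if_pos ⟨hv, hu⟩]
          · rw [if_neg (fun hh => hu hh.2)]
            have h1 := hz v u hv hu
            have h2 : φ.M (σ i) v u = 0 := by
              rcases hi with h | h
              · rw [h, hσ, Equiv.swap_apply_left]; exact h1.2
              · rw [h, hσ, Equiv.swap_apply_right]; exact h1.1
            have h3 : φ.M i v u = 0 := by
              rcases hi with h | h
              · rw [h]; exact h1.1
              · rw [h]; exact h1.2
            rw [h2, h3]
        rw [Finset.sum_congr rfl (fun u _ => hsum u)]
        exact φ.matching _ v
      · push_neg at hi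
        have hσi : σ i = i := by
          rw [hσ, Equiv.swap_apply_of_ne_of_ne hi.1 hi.2]
        have hsum : ∀ u, φ.M (if v ∈ S ∧ u ∈ S then σ i else i) v u = φ.M i v u := by
          intro u
          by_cases hu : v ∈ S ∧ u ∈ S
          · rw [if_pos hu, hσi]
          · rw [if_neg hu]
        rw [Finset.sum_congr rfl (fun u _ => hsum u)]
        exact φ.matching i v
    · have hsum : ∀ u, φ.M (if v ∈ S ∧ u ∈ S then σ i else i) v u = φ.M i v u := by
        intro u
        rw [if_neg (fun hh => hv hh.1)]
      rw [Finset.sum_congr rfl (fun u _ => hsum u)]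
      exact φ.matching i v
  · -- total
    intro u v
    by_cases h : u ∈ S ∧ v ∈ S
    · simp only [if_pos h]
      rw [← φ.total u v]
      exact Fintype.sum_equiv σ _ _ (fun c => rfl)
    · simp only [if_neg h]
      exact φ.total u v
  · intro c u v hca hcγ
    dsimp only
    have hσc : σ c = c := by rw [hσ, Equiv.swap_apply_of_ne_of_ne hca hcγ]
    by_cases h : u ∈ S ∧ v ∈ S
    · rw [if_pos h, hσc]
    · rw [if_neg h]
  · intro c u v hu
    dsimp only
    rw [if_neg (fun hh => hu hh.1)]
  · intro v hv c
    dsimp only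
    apply Finset.sum_congr rfl
    intro u _
    rw [if_neg (fun hh => hv hh.1)]
  · intro v hv
    refine ⟨?_, ?_, ?_⟩
    · apply Finset.sum_congr rfl
      intro u _
      dsimp only
      by_cases hu : u ∈ S
      · rw [if_pos ⟨hv, hu⟩, hσ, Equiv.swap_apply_left]
      · rw [if_neg (fun hh => hu hh.2)]
        have h1 := hz v u hv hu
        rw [h1.1, h1.2]
    · apply Finset.sum_congr rfl
      intro u _
      dsimp only
      by_cases hu : u ∈ S
      · rw [if_pos ⟨hv, hu⟩, hσ, Equiv.swap_apply_right]
      · rw [if_neg (fun hh => hu hh.2)]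
        have h1 := hz v u hv hu
        rw [h1.1, h1.2]
    · intro c hca hcγ
      apply Finset.sum_congr rfl
      intro u _
      dsimp only
      have hσc : σ c = c := by rw [hσ, Equiv.swap_apply_of_ne_of_ne hca hcγ]
      by_cases hu : v ∈ S ∧ u ∈ S
      · rw [if_pos hu, hσc]
      · rw [if_neg hu]

lemma conn_card_le_edges {W : Type*} [Fintype W] (G' : SimpleGraph W)
    [Fintype G'.edgeSet] (hconn : ∀ u v : W, G'.Reachable u v) :
    Fintype.card W ≤ G'.edgeFinset.card + 1 := by
  classical
  rcases isEmpty_or_nonempty W with hW | hW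
  · simp [Fintype.card_eq_zero]
  obtain ⟨r⟩ := hW
  have hstep : ∀ v : W, ∃ u, v ≠ r → G'.Adj v u ∧ G'.dist u r < G'.dist v r := by
    intro v
    by_cases hv : v = r
    · exact ⟨r, fun h => (h hv).elim⟩
    obtain ⟨p, hp⟩ := (hconn v r).exists_walk_length_eq_dist
    cases p with
    | nil => exact absurd rfl hv
    | @cons _ b _ h q =>
      refine ⟨b, fun _ => ⟨h, ?_⟩⟩
      have h1 := SimpleGraph.dist_le q
      have h2 : G'.dist v r = q.length + 1 := by
        rw [← hp]
        simp [SimpleGraph.Walk.length_cons]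
      omega
  choose pa hpa using hstep
  have hinj : Set.InjOn (fun v : W => s(v, pa v)) {v : W | v ≠ r} := by
    intro u hu v hv he
    simp only [Sym2.eq, Sym2.rel_iff', Prod.mk.injEq, Prod.swap_prod_mk] at he
    rcases he with ⟨h1, -⟩ | ⟨h1, h2⟩
    · exact h1
    · exfalso
      have d1 := (hpa u hu).2
      have d2 := (hpa v hv).2
      rw [h2, h1] at d1
      omega
  have hmem : ∀ v : W, v ≠ r → s(v, pa v) ∈ G'.edgeFinset := by
    intro v hv
    rw [SimpleGraph.mem_edgeFinset, SimpleGraph.mem_edgeSet]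
    exact (hpa v hv).1
  have hcard : (Finset.univ.filter (fun v : W => v ≠ r)).card ≤ G'.edgeFinset.card := by
    apply Finset.card_le_card_of_injOn (fun v => s(v, pa v))
    · intro v hv
      exact hmem v (Finset.mem_filter.1 hv).2
    · intro u hu v hv he
      exact hinj (Finset.mem_filter.1 hu).2 (Finset.mem_filter.1 hv).2 he
  have hcard2 : (Finset.univ.filter (fun v : W => v ≠ r)).card = Fintype.card W - 1 := by
    rw [Finset.filter_ne']
    rw [Finset.card_erase_of_mem (Finset.mem_univ r)]
    rfl
  have hpos : 1 ≤ Fintype.card W := Fintype.card_pos_iff.2 ⟨r⟩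
  omega

end MGAux

namespace MGAux
open Multigraph Finset

variable {V : Type*} [Fintype V] [DecidableEq V]
variable {G : Multigraph V} {k : ℕ}

lemma sum_val_le {p : V → Prop} [Fintype {x // p x}] (g : V → ℕ) :
    (∑ u : {x // p x}, g u.val) ≤ ∑ u, g u := by
  classical
  rw [show (∑ u : {x // p x}, g u.val)
      = ∑ x ∈ Finset.univ.map (Function.Embedding.subtype p), g x from
    (Finset.sum_map Finset.univ (Function.Embedding.subtype p) g).symm]
  exact Finset.sum_le_sum_of_subset (Finset.subset_univ _)

lemma deficiency (φ : Col G k) (α γ : Fin k) {x a b : V} (hab : a ≠ b) (hxa : x ≠ a)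
    (hxb : x ≠ b) (hx : φ.free α x) (ha : φ.free γ a) (hb : φ.free γ b)
    (hra : (KG φ α γ).Reachable x a) (hrb : (KG φ α γ).Reachable x b) : False := by
  classical
  set K := KG φ α γ with hK
  let W := {v // K.Reachable x v}
  let G' : SimpleGraph W := K.comap (Subtype.val)
  have key : ∀ (u v : V) (p : K.Walk u v) (hu : K.Reachable x u) (hv : K.Reachable x v),
      G'.Reachable ⟨u, hu⟩ ⟨v, hv⟩ := by
    intro u v p
    induction p with
    | nil =>
      intro hu hv
      exact SimpleGraph.Reachable.refl _
    | @cons u' b' v' h q ih =>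
      intro hu hv
      have hb' : K.Reachable x b' := hu.trans h.reachable
      have hadj : G'.Adj ⟨u', hu⟩ ⟨b', hb'⟩ := h
      exact (hadj.reachable).trans (ih hb' hv)
  have hconn : ∀ u v : W, G'.Reachable u v := by
    intro u v
    obtain ⟨p⟩ := u.2.symm.trans v.2
    exact key u.val v.val p u.2 v.2
  have h1 := conn_card_le_edges G' hconn
  have h2 := SimpleGraph.sum_degrees_eq_twice_card_edges G'
  have h3 : ∀ v : W, G'.degree v ≤ ∑ u : W, (φ.M α v.val u.val + φ.M γ v.val u.val) := by
    intro v
    rw [← SimpleGraph.card_neighborFinset_eq_degree, SimpleGraph.neighborFinset_eq_filter,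
      Finset.card_filter]
    apply Finset.sum_le_sum
    intro u _
    by_cases h : G'.Adj v u
    · rw [if_pos h]
      have := (show v.val ≠ u.val ∧ 0 < φ.M α v.val u.val + φ.M γ v.val u.val from h).2
      omega
    · rw [if_neg h]
      omega
  set f : V → ℕ := fun v => (∑ u, φ.M α v u) + (∑ u, φ.M γ v u) with hf
  have h5 : (∑ v : W, ∑ u : W, (φ.M α v.val u.val + φ.M γ v.val u.val)) ≤ ∑ v : W, f v.val := by
    apply Finset.sum_le_sum
    intro v _
    rw [Finset.sum_add_distrib, hf]
    exact Nat.add_le_add (sum_val_le _) (sum_val_le _)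
  have hf2 : ∀ v, f v ≤ 2 := by
    intro v
    have := φ.matching α v
    have := φ.matching γ v
    simp only [hf]
    omega
  have hfx : f x ≤ 1 := by
    have h := φ.matching γ x
    have h0 : (∑ u, φ.M α x u) = 0 := hx
    simp only [hf]
    omega
  have hfa : f a ≤ 1 := by
    have h := φ.matching α a
    have h0 : (∑ u, φ.M γ a u) = 0 := ha
    simp only [hf]
    omega
  have hfb : f b ≤ 1 := by
    have h := φ.matching α b
    have h0 : (∑ u, φ.M γ b u) = 0 := hb
    simp only [hf]
    omega
  set xw : W := ⟨x, SimpleGraph.Reachable.refl x⟩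
  set aw : W := ⟨a, hra⟩
  set bw : W := ⟨b, hrb⟩
  set T : Finset W := {xw, aw, bw} with hT
  have hTcard : T.card = 3 := by
    rw [hT]
    rw [Finset.card_insert_of_notMem, Finset.card_insert_of_notMem, Finset.card_singleton]
    · simp only [Finset.mem_singleton]
      exact fun h => hab (Subtype.ext_iff.1 h)
    · simp only [Finset.mem_insert, Finset.mem_singleton]
      rintro (h | h)
      · exact hxa (Subtype.ext_iff.1 h)
      · exact hxb (Subtype.ext_iff.1 h)
  have hsplit : (∑ v ∈ Finset.univ \ T, f v.val) + ∑ v ∈ T, f v.val = ∑ v : W, f v.val :=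
    Finset.sum_sdiff (Finset.subset_univ T)
  have hTsum : (∑ v ∈ T, f v.val) ≤ 3 := by
    have hb1 : ∀ v ∈ T, f v.val ≤ 1 := by
      intro v hv
      rw [hT] at hv
      simp only [Finset.mem_insert, Finset.mem_singleton] at hv
      rcases hv with h | h | h <;> rw [h]
      · exact hfx
      · exact hfa
      · exact hfb
    calc (∑ v ∈ T, f v.val) ≤ T.card • 1 := Finset.sum_le_card_nsmul T _ 1 hb1
    _ = 3 := by rw [hTcard]; simp
  have hRsum : (∑ v ∈ Finset.univ \ T, f v.val) ≤ (Finset.univ \ T).card * 2 := by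
    have := Finset.sum_le_card_nsmul (Finset.univ \ T) (fun v => f v.val) 2
      (fun v _ => hf2 v.val)
    simpa using this
  have hcards : (Finset.univ \ T).card = Fintype.card W - 3 := by
    rw [Finset.card_sdiff_of_subset (Finset.subset_univ T), hTcard]
    rfl
  have hTle : 3 ≤ Fintype.card W := by
    rw [← hTcard]
    exact Finset.card_le_univ T
  have hdegsum : (∑ v : W, G'.degree v) ≤ ∑ v : W, f v.val :=
    le_trans (Finset.sum_le_sum (fun v _ => h3 v)) h5
  omega

end MGAux

namespace MGAux
open Multigraph Finset

variable {V : Type*} [Fintype V] [DecidableEq V]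
variable {G : Multigraph V} {k : ℕ}

lemma deg_pos_of_mu {x w : V} (h : 1 ≤ G.mu x w) : 1 ≤ deg G x :=
  le_trans h (Finset.single_le_sum (f := fun u => G.mu x u)
    (fun u _ => Nat.zero_le _) (Finset.mem_univ w))

lemma elementary {x w : V} {φ : Col (del G x w) k} (hmuw : 1 ≤ G.mu x w)
    (hdx : deg G x ≤ k) {n : ℕ} {s : Fin n → V × Fin k} (hfan : IsFan x w φ n s)
    (hnc : ¬ Nonempty (Col G k))
    (hmax : ∀ (z : V) (c : Fin k), φ.M c x z = 1 →
      (φ.free c w ∨ ∃ j : Fin n, φ.free c (s j).1) → (∃ j : Fin n, (s j).2 = c))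
    (γ : Fin k) {u v : V}
    (hu : u = w ∨ ∃ i : Fin n, (s i).1 = u) (hv : v = w ∨ ∃ i : Fin n, (s i).1 = v)
    (huv : u ≠ v) (hfu : φ.free γ u) (hfv : φ.free γ v) : False := by
  classical
  have hxw : x ≠ w := ne_of_mu_pos hmuw
  -- a free colour at x
  have hdel : deg (del G x w) x < k := by
    have h1 : deg (del G x w) x = deg G x - 1 := deg_del_left G hxw hmuw
    have h2 : 1 ≤ deg G x := deg_pos_of_mu hmuw
    omega
  obtain ⟨α, hα⟩ := φ.exists_free x hdel
  -- γ is not free at x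
  have hγx : ¬ φ.free γ x := by
    intro h
    rcases hu with rfl | ⟨i, hi⟩
    · exact hnc (extend_hole φ hmuw h hfu)
    · exact hnc (extend_fan hmuw hfan i h (hi ▸ hfu))
  have hαγ : α ≠ γ := fun he => hγx (he ▸ hα)
  set K := KG φ α γ with hK
  set R : V → Prop := fun z => K.Reachable x z with hR
  have hxu : x ≠ u := by
    rcases hu with rfl | ⟨i, hi⟩
    · exact hxw
    · exact hi ▸ ne_of_M_one (hfan i).1
  have hxv : x ≠ v := by
    rcases hv with rfl | ⟨i, hi⟩
    · exact hxw
    · exact hi ▸ ne_of_M_one (hfan i).1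
  have hnr : ¬ R u ∨ ¬ R v := by
    by_contra hc
    push_neg at hc
    exact deficiency φ α γ huv hxu hxv hα hfu hfv hc.1 hc.2
  by_cases hA : φ.free γ w ∧ ¬ R w
  · -- swap the component of w
    set S : Set V := {z | K.Reachable w z} with hS
    have hcl : ∀ a b, a ∈ S → K.Adj a b → b ∈ S := fun a b ha hadj => ha.trans hadj.reachable
    obtain ⟨φ', hP1, hP2, hP3, hP4⟩ := kempe_swap φ α γ S hcl
    have hxS : x ∉ S := fun hxmem => hA.2 hxmem.symm
    have hwS : w ∈ S := SimpleGraph.Reachable.refl w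
    have hfx' : φ'.free α x := by
      unfold Col.free
      rw [hP3 x hxS α]
      exact hα
    have hfw' : φ'.free α w := by
      unfold Col.free
      rw [(hP4 w hwS).1]
      exact hA.1
    exact hnc (extend_hole φ' hmuw hfx' hfw')
  · -- some fan vertex is γ-free and not reachable from x
    have hB : φ.free γ w → R w := by
      intro h
      by_contra hc
      exact hA ⟨h, hc⟩
    set P : Fin n → Prop := fun i => φ.free γ (s i).1 ∧ ¬ R (s i).1 with hP
    have hPne : ∃ i, P i := by
      rcases hnr with h | h
      · rcases hu with rfl | ⟨i, hi⟩
        · exact absurd (hB hfu) h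
        · refine ⟨i, ?_⟩
          show φ.free γ (s i).1 ∧ ¬ R (s i).1
          rw [hi]
          exact ⟨hfu, h⟩
      · rcases hv with rfl | ⟨i, hi⟩
        · exact absurd (hB hfv) h
        · refine ⟨i, ?_⟩
          show φ.free γ (s i).1 ∧ ¬ R (s i).1
          rw [hi]
          exact ⟨hfv, h⟩
    set I : Finset (Fin n) := Finset.univ.filter P with hI
    have hIne : I.Nonempty := by
      obtain ⟨i, hi⟩ := hPne
      exact ⟨i, by rw [hI]; exact Finset.mem_filter.2 ⟨Finset.mem_univ i, hi⟩⟩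
    set i₀ : Fin n := I.min' hIne with hi₀
    have hi₀P : P i₀ := (Finset.mem_filter.1 (I.min'_mem hIne)).2
    have hmin : ∀ j : Fin n, P j → i₀ ≤ j := fun j hj =>
      I.min'_le j (by rw [hI]; exact Finset.mem_filter.2 ⟨Finset.mem_univ j, hj⟩)
    set z₀ : V := (s i₀).1 with hz₀
    set S : Set V := {z | K.Reachable z₀ z} with hS
    have hcl : ∀ a b, a ∈ S → K.Adj a b → b ∈ S := fun a b ha hadj => ha.trans hadj.reachable
    obtain ⟨φ', hP1, hP2, hP3, hP4⟩ := kempe_swap φ α γ S hcl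
    have hxS : x ∉ S := fun hxmem => hi₀P.2 hxmem.symm
    have hz₀S : z₀ ∈ S := SimpleGraph.Reachable.refl z₀
    have hfree_notS : ∀ (c : Fin k) (p : V), p ∉ S → (φ'.free c p ↔ φ.free c p) := by
      intro c p hp
      unfold Col.free
      rw [hP3 p hp c]
    have hfree_other : ∀ (c : Fin k) (p : V), c ≠ α → c ≠ γ → (φ'.free c p ↔ φ.free c p) := by
      intro c p h1 h2
      unfold Col.free
      by_cases hp : p ∈ S
      · rw [(hP4 p hp).2.2 c h1 h2]
      · rw [hP3 p hp c]
    have hMx : ∀ (c : Fin k) (z : V), φ'.M c x z = φ.M c x z := fun c z => hP2 c x z hxS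
    set m : ℕ := i₀.val + 1 with hmdef
    have hm : m ≤ n := i₀.isLt
    set s' : Fin m → V × Fin k := fun j => s (Fin.castLE hm j) with hs'
    have hfan' : IsFan x w φ' m s' := by
      intro j
      set J : Fin n := Fin.castLE hm j with hJ
      have hJfan := hfan J
      have hJval : J.val = j.val := rfl
      have hji₀ : j.val ≤ i₀.val := by have := j.isLt; omega
      refine ⟨?_, ?_, ?_⟩
      · show φ'.M (s J).2 x (s J).1 = 1
        rw [hMx]
        exact hJfan.1
      · show φ'.free (s J).2 w ∨ _
        have hcol := hJfan.2.1
        by_cases hcα : (s J).2 = α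
        · exact absurd hα (by
            have := φ.not_free_of_M (show φ.M α x (s J).1 = 1 from hcα ▸ hJfan.1)
            exact this)
        by_cases hcγ : (s J).2 = γ
        · rcases hcol with hpw | ⟨j', hj', hfp⟩
          · have hfwγ : φ.free γ w := hcγ ▸ hpw
            have hwS : w ∉ S := fun hmem => hi₀P.2 ((hB hfwγ).trans hmem.symm)
            exact Or.inl ((hfree_notS _ w hwS).2 hpw)
          · have hfpγ : φ.free γ (s j').1 := hcγ ▸ hfp
            have hj'J : j'.val < j.val := Fin.lt_def.1 hj'
            have hpS : (s j').1 ∉ S := by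
              intro hmem
              by_cases hr : R (s j').1
              · exact hi₀P.2 (hr.trans hmem.symm)
              · have hPj' : P j' := ⟨hfpγ, hr⟩
                have hle := Fin.le_def.1 (hmin j' hPj')
                omega
            refine Or.inr ⟨⟨j'.val, by omega⟩, Fin.lt_def.2 (by simpa using hj'J), ?_⟩
            have hcast : Fin.castLE hm (⟨j'.val, by omega⟩ : Fin m) = j' := by
              apply Fin.ext
              rfl
            show φ'.free (s J).2 (s (Fin.castLE hm ⟨j'.val, by omega⟩)).1
            rw [hcast]
            exact hcγ ▸ ((hfree_notS γ _ hpS).2 hfpγ)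
        · rcases hcol with hpw | ⟨j', hj', hfp⟩
          · exact Or.inl ((hfree_other _ w hcα hcγ).2 hpw)
          · have hj'J : j'.val < j.val := Fin.lt_def.1 hj'
            refine Or.inr ⟨⟨j'.val, by omega⟩, Fin.lt_def.2 (by simpa using hj'J), ?_⟩
            have hcast : Fin.castLE hm (⟨j'.val, by omega⟩ : Fin m) = j' := by
              apply Fin.ext
              rfl
            show φ'.free (s J).2 (s (Fin.castLE hm ⟨j'.val, by omega⟩)).1
            rw [hcast]
            exact (hfree_other _ _ hcα hcγ).2 hfp
      · intro j'' hlt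
        show (s (Fin.castLE hm j'')).2 ≠ (s J).2
        exact hJfan.2.2 (Fin.castLE hm j'') (Fin.lt_def.2 (Fin.lt_def.1 hlt))
    have hfx' : φ'.free α x := by
      unfold Col.free
      rw [hP3 x hxS α]
      exact hα
    have hfz' : φ'.free α z₀ := by
      unfold Col.free
      rw [(hP4 z₀ hz₀S).1]
      exact hi₀P.1
    set jlast : Fin m := ⟨i₀.val, by omega⟩ with hjl
    have hslast : (s' jlast).1 = z₀ := by
      have hcast : Fin.castLE hm jlast = i₀ := by
        apply Fin.ext
        rfl
      rw [hs']
      show (s (Fin.castLE hm jlast)).1 = z₀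
      rw [hcast]
    exact hnc (extend_fan hmuw hfan' jlast hfx' (hslast.symm ▸ hfz'))

end MGAux

namespace MGAux
open Multigraph Finset

variable {V : Type*} [Fintype V] [DecidableEq V]
variable {G : Multigraph V} {k : ℕ}

lemma fan_len_le {x w : V} {φ : Col (del G x w) k} {n : ℕ} {s : Fin n → V × Fin k}
    (hfan : IsFan x w φ n s) : n ≤ k := by
  have hinj : Function.Injective (fun i : Fin n => (s i).2) := by
    intro i j he
    by_contra hne
    rcases lt_or_gt_of_ne (fun h => hne h) with h | h
    · exact (hfan j).2.2 i h he
    · exact (hfan i).2.2 j h (Eq.symm he)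
  simpa using Fintype.card_le_of_injective _ hinj

/-- The main extension lemma (Vizing fan argument): if `x` has at most one "threat"
neighbour and no strong threat, any colouring of `G - xw` extends to `G`. -/
lemma fan_main {x w : V} (φ : Col (del G x w) k) (hmuw : 1 ≤ G.mu x w)
    (hdeg : ∀ v, deg G v ≤ k)
    (hone : ∀ z₁ z₂ : V, 1 ≤ G.mu x z₁ → k + 1 ≤ deg G z₁ + G.mu x z₁ →
      1 ≤ G.mu x z₂ → k + 1 ≤ deg G z₂ + G.mu x z₂ → z₁ = z₂)
    (hstr : ∀ z, 1 ≤ G.mu x z → deg G z + G.mu x z ≤ k + 1) :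
    Nonempty (Col G k) := by
  classical
  by_contra hnc
  have hxw : x ≠ w := ne_of_mu_pos hmuw
  -- maximal fan
  set P : ℕ → Prop := fun n => ∃ s : Fin n → V × Fin k, IsFan x w φ n s with hPdef
  have hP0 : P 0 := ⟨Fin.elim0, fun i => i.elim0⟩
  set N : ℕ := Nat.findGreatest P k with hN
  have hPN : P N := Nat.findGreatest_spec (Nat.zero_le k) hP0
  obtain ⟨s, hfan⟩ := hPN
  have hmax : ∀ (z : V) (c : Fin k), φ.M c x z = 1 →
      (φ.free c w ∨ ∃ j : Fin N, φ.free c (s j).1) → (∃ j : Fin N, (s j).2 = c) := by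
    intro z c hM hpar
    by_contra hno
    push_neg at hno
    set s' : Fin (N + 1) → V × Fin k := fun j =>
      if h : j.val < N then s ⟨j.val, h⟩ else (z, c) with hs'
    have hfan' : IsFan x w φ (N + 1) s' := by
      intro i
      by_cases hi : i.val < N
      · have hfi := hfan ⟨i.val, hi⟩
        have hseq : s' i = s ⟨i.val, hi⟩ := by rw [hs']; simp [hi]
        refine ⟨by rw [hseq]; exact hfi.1, ?_, ?_⟩
        · rcases hfi.2.1 with hw | ⟨j', hj', hfp⟩
          · exact Or.inl (by rw [hseq]; exact hw)
          · have hj'N : j'.val < N := j'.isLt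
            refine Or.inr ⟨⟨j'.val, by omega⟩, ?_, ?_⟩
            · rw [Fin.lt_def]
              simpa using Fin.lt_def.1 hj'
            · have : s' ⟨j'.val, by omega⟩ = s j' := by
                rw [hs']
                simp only [hj'N, dif_pos]
              rw [this, hseq]
              exact hfp
        · intro j hj
          by_cases hjN : j.val < N
          · have : s' j = s ⟨j.val, hjN⟩ := by rw [hs']; simp [hjN]
            rw [this, hseq]
            exact hfan ⟨i.val, hi⟩ |>.2.2 ⟨j.val, hjN⟩ (by rw [Fin.lt_def]; exact Fin.lt_def.1 hj)
          · exfalso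
            have := Fin.lt_def.1 hj
            omega
      · have hiN : i.val = N := by have := i.isLt; omega
        have hseq : s' i = (z, c) := by rw [hs']; simp [hi]
        refine ⟨by rw [hseq]; exact hM, ?_, ?_⟩
        · rcases hpar with hw | ⟨j', hfp⟩
          · exact Or.inl (by rw [hseq]; exact hw)
          · have hj'N : j'.val < N := j'.isLt
            refine Or.inr ⟨⟨j'.val, by omega⟩, ?_, ?_⟩
            · rw [Fin.lt_def]
              show j'.val < i.val
              omega
            have : s' ⟨j'.val, by omega⟩ = s j' := by
              rw [hs']
              simp only [hj'N, dif_pos]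
            rw [this, hseq]
            exact hfp
        · intro j hj
          have hjN : j.val < N := by
            have := Fin.lt_def.1 hj
            omega
          have : s' j = s ⟨j.val, hjN⟩ := by rw [hs']; simp [hjN]
          rw [this, hseq]
          exact hno ⟨j.val, hjN⟩
    have hlen : N + 1 ≤ k := fan_len_le hfan'
    have hgr : N < N + 1 := by omega
    exact Nat.findGreatest_is_greatest (P := P) (hN ▸ hgr) hlen ⟨s', hfan'⟩
  -- the vertex set of the fan
  set Z : Finset V := insert w (Finset.univ.filter (fun z => ∃ i : Fin N, (s i).1 = z))
    with hZ
  have hwZ : w ∈ Z := Finset.mem_insert_self w _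
  have hmemZ : ∀ z, z ∈ Z ↔ (z = w ∨ ∃ i : Fin N, (s i).1 = z) := by
    intro z
    rw [hZ]
    simp
  have hmuZ : ∀ z ∈ Z, 1 ≤ G.mu x z := by
    intro z hz
    rcases (hmemZ z).1 hz with rfl | ⟨i, hi⟩
    · exact hmuw
    · exact hi ▸ mu_pos_of_M_one (hfan i).1
  have hxZ : ∀ z ∈ Z, z ≠ x := by
    intro z hz
    exact fun h => (ne_of_mu_pos (hmuZ z hz)).symm (h ▸ rfl)
  -- frees are not free at x
  have hnfx : ∀ (c : Fin k) (z : V), z ∈ Z → φ.free c z → ¬ φ.free c x := by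
    intro c z hz hfz hfx
    rcases (hmemZ z).1 hz with rfl | ⟨i, hi⟩
    · exact hnc (extend_hole φ hmuw hfx hfz)
    · exact hnc (extend_fan hmuw hfan i hfx (hi ▸ hfz))
  -- free colours of fan vertices are slot colours
  set Call : Finset (Fin k) := Finset.univ.image (fun i : Fin N => (s i).2) with hCall
  have hsub : ∀ z ∈ Z, φ.freeSet z ⊆ Call := by
    intro z hz c hc
    have hfz : φ.free c z := (φ.mem_freeSet c z).1 hc
    have hnf : ¬ φ.free c x := hnfx c z hz hfz
    obtain ⟨u', hu'⟩ := φ.not_free hnf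
    have hpar : φ.free c w ∨ ∃ j : Fin N, φ.free c (s j).1 := by
      rcases (hmemZ z).1 hz with rfl | ⟨i, hi⟩
      · exact Or.inl hfz
      · exact Or.inr ⟨i, hi.symm ▸ hfz⟩
    obtain ⟨j, hj⟩ := hmax u' c hu' hpar
    rw [hCall]
    exact Finset.mem_image.2 ⟨j, Finset.mem_univ j, hj⟩
  have hdisj : ∀ z₁ ∈ Z, ∀ z₂ ∈ Z, z₁ ≠ z₂ → Disjoint (φ.freeSet z₁) (φ.freeSet z₂) := by
    intro z₁ hz₁ z₂ hz₂ hne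
    rw [Finset.disjoint_left]
    intro c hc1 hc2
    exact elementary hmuw (hdeg x) hfan hnc hmax c
      (by rcases (hmemZ z₁).1 hz₁ with h | h; exact Or.inl h; exact Or.inr h)
      (by rcases (hmemZ z₂).1 hz₂ with h | h; exact Or.inl h; exact Or.inr h)
      hne ((φ.mem_freeSet c z₁).1 hc1) ((φ.mem_freeSet c z₂).1 hc2)
  have hFR : (∑ z ∈ Z, (φ.freeSet z).card) ≤ N := by
    rw [← Finset.card_biUnion hdisj]
    calc (Z.biUnion (fun z => φ.freeSet z)).card ≤ Call.card := by
          apply Finset.card_le_card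
          intro c hc
          obtain ⟨z, hz, hcz⟩ := Finset.mem_biUnion.1 hc
          exact hsub z hz hcz
    _ ≤ N := by
          rw [hCall]
          calc (Finset.univ.image (fun i : Fin N => (s i).2)).card
              ≤ (Finset.univ : Finset (Fin N)).card := Finset.card_image_le
          _ = N := by simp
  -- N is at most the number of coloured edges at x into Z
  have hNle : N ≤ ∑ z ∈ Z, (del G x w).mu x z := by
    have hfib : (Finset.univ : Finset (Fin N)).card
        = ∑ z ∈ Z, (Finset.univ.filter (fun i : Fin N => (s i).1 = z)).card := by
      apply Finset.card_eq_sum_card_fiberwise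
      intro i _
      rw [Finset.mem_coe, hmemZ]
      exact Or.inr ⟨i, rfl⟩
    have hper : ∀ z ∈ Z, (Finset.univ.filter (fun i : Fin N => (s i).1 = z)).card
        ≤ (del G x w).mu x z := by
      intro z _
      have hEcard : (Finset.univ.filter (fun c : Fin k => φ.M c x z = 1)).card
          = (del G x w).mu x z := by
        rw [Finset.card_filter, ← φ.total x z]
        apply Finset.sum_congr rfl
        intro c _
        have := φ.le_one c x z
        interval_cases h : φ.M c x z <;> simp
      rw [← hEcard]
      apply Finset.card_le_card_of_injOn (fun i => (s i).2)
      · intro i hi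
        rw [Finset.mem_coe, Finset.mem_filter] at hi ⊢
        refine ⟨Finset.mem_univ _, ?_⟩
        rw [← hi.2]
        exact (hfan i).1
      · intro i hi j hj he
        by_contra hne
        rcases lt_or_gt_of_ne (fun h => hne h) with h | h
        · exact (hfan j).2.2 i h he
        · exact (hfan i).2.2 j h (Eq.symm he)
    calc N = (Finset.univ : Finset (Fin N)).card := by simp
    _ = ∑ z ∈ Z, (Finset.univ.filter (fun i : Fin N => (s i).1 = z)).card := hfib
    _ ≤ ∑ z ∈ Z, (del G x w).mu x z := Finset.sum_le_sum hper
  -- edge counts: deleting xw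
  have hmuD : (∑ z ∈ Z, (del G x w).mu x z) + 1 ≤ ∑ z ∈ Z, G.mu x z := by
    have hlt : (∑ z ∈ Z, (del G x w).mu x z) < ∑ z ∈ Z, G.mu x z := by
      apply Finset.sum_lt_sum (fun z _ => mu_del_le G x w x z)
      refine ⟨w, hwZ, ?_⟩
      rw [mu_del_pair]
      omega
    omega
  -- free counts per vertex
  have hfr : ∀ z ∈ Z, k ≤ deg (del G x w) z + (φ.freeSet z).card :=
    fun z _ => φ.card_freeSet z
  have hdegD : (∑ z ∈ Z, deg (del G x w) z) + 1 ≤ ∑ z ∈ Z, deg G z := by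
    have hlt : (∑ z ∈ Z, deg (del G x w) z) < ∑ z ∈ Z, deg G z := by
      apply Finset.sum_lt_sum (fun z _ => deg_del_le G x w z)
      refine ⟨w, hwZ, ?_⟩
      rw [deg_del_right G hxw hmuw]
      have := deg_pos_of_mu (G.symm x w ▸ hmuw : 1 ≤ G.mu w x)
      omega
    omega
  have hsumk : Z.card * k ≤ (∑ z ∈ Z, deg (del G x w) z) + ∑ z ∈ Z, (φ.freeSet z).card := by
    calc Z.card * k = ∑ _z ∈ Z, k := by rw [Finset.sum_const, smul_eq_mul, mul_comm]
    _ ≤ ∑ z ∈ Z, (deg (del G x w) z + (φ.freeSet z).card) := Finset.sum_le_sum hfr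
    _ = _ := Finset.sum_add_distrib
  -- main chain
  have hmain : Z.card * k + 2 ≤ ∑ z ∈ Z, (deg G z + G.mu x z) := by
    rw [show (∑ z ∈ Z, (deg G z + G.mu x z)) = (∑ z ∈ Z, deg G z) + ∑ z ∈ Z, G.mu x z
      from Finset.sum_add_distrib]
    omega
  -- upper bound from threat hypotheses
  have hup : (∑ z ∈ Z, (deg G z + G.mu x z)) ≤ Z.card * k + 1 := by
    by_cases hex : ∃ z ∈ Z, k + 1 ≤ deg G z + G.mu x z
    · obtain ⟨z₀, hz₀, hz₀t⟩ := hex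
      have hothers : ∀ z ∈ Z.erase z₀, deg G z + G.mu x z ≤ k := by
        intro z hz
        obtain ⟨hne, hzZ⟩ := Finset.mem_erase.1 hz
        by_contra hc
        push_neg at hc
        exact hne (hone z z₀ (hmuZ z hzZ) hc (hmuZ z₀ hz₀) hz₀t)
      have h1 : (∑ z ∈ Z.erase z₀, (deg G z + G.mu x z)) ≤ (Z.erase z₀).card * k := by
        have := Finset.sum_le_card_nsmul (Z.erase z₀) (fun z => deg G z + G.mu x z) k hothers
        simpa [mul_comm] using this
      have h2 : (deg G z₀ + G.mu x z₀) + ∑ z ∈ Z.erase z₀, (deg G z + G.mu x z)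
          = ∑ z ∈ Z, (deg G z + G.mu x z) :=
        Finset.add_sum_erase Z (fun z => deg G z + G.mu x z) hz₀
      have h3 : deg G z₀ + G.mu x z₀ ≤ k + 1 := hstr z₀ (hmuZ z₀ hz₀)
      have h4 : (Z.erase z₀).card = Z.card - 1 := Finset.card_erase_of_mem hz₀
      rw [h4] at h1
      have h5 : 1 ≤ Z.card := Finset.card_pos.2 ⟨w, hwZ⟩
      have h6 : (Z.card - 1) * k + k = Z.card * k := by
        obtain ⟨m, hm⟩ := Nat.exists_eq_add_of_le h5
        rw [hm, Nat.add_sub_cancel_left]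
        ring
      omega
    · push_neg at hex
      calc (∑ z ∈ Z, (deg G z + G.mu x z)) ≤ Z.card * k := by
            have := Finset.sum_le_card_nsmul Z (fun z => deg G z + G.mu x z) k
              (fun z hz => by show deg G z + G.mu x z ≤ k; have := hex z hz; omega)
            simpa [mul_comm] using this
      _ ≤ Z.card * k + 1 := by omega
  omega

end MGAux

namespace MGAux
open Finset

variable {V : Type*} [Fintype V] [DecidableEq V]

lemma acyclic_no_min_two {B : SimpleGraph V} (hacyc : B.IsAcyclic) (C : Finset V)
    (hne : C.Nonempty)
    (h2 : ∀ x ∈ C, ∃ z₁ z₂, z₁ ∈ C ∧ z₂ ∈ C ∧ z₁ ≠ z₂ ∧ B.Adj x z₁ ∧ B.Adj x z₂) :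
    False := by
  classical
  set T := {p : V × V // p.1 ∈ C ∧ p.2 ∈ C ∧ B.Adj p.1 p.2} with hT
  have hstep : ∀ t : T, ∃ t' : T, t'.val.1 = t.val.2 ∧ t'.val.2 ≠ t.val.1 := by
    rintro ⟨⟨p, c⟩, hp, hc, hadj⟩
    obtain ⟨z₁, z₂, hz₁C, hz₂C, hz12, ha1, ha2⟩ := h2 c hc
    by_cases h : z₁ = p
    · exact ⟨⟨(c, z₂), hc, hz₂C, ha2⟩, rfl, fun he => hz12 ((h ▸ he : z₂ = z₁)).symm⟩
    · exact ⟨⟨(c, z₁), hc, hz₁C, ha1⟩, rfl, h⟩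
  choose step hstep1 hstep2 using hstep
  obtain ⟨x₀, hx₀⟩ := hne
  obtain ⟨z₁, z₂, hz₁C, _, _, ha1, _⟩ := h2 x₀ hx₀
  set t₀ : T := ⟨(x₀, z₁), hx₀, hz₁C, ha1⟩ with ht₀
  set g : ℕ → T := fun n => step^[n] t₀ with hg
  set f : ℕ → V := fun n => (g n).val.1 with hf
  have hgs : ∀ n, g (n + 1) = step (g n) := by
    intro n
    rw [hg]
    exact Function.iterate_succ_apply' step n t₀
  have hf1 : ∀ n, f (n + 1) = (g n).val.2 := by
    intro n
    show (g (n + 1)).val.1 = (g n).val.2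
    rw [hgs n]
    exact hstep1 (g n)
  have hfadj : ∀ n, B.Adj (f n) (f (n + 1)) := by
    intro n
    rw [hf1 n, hf]
    exact (g n).2.2.2
  have hfnb : ∀ n, f (n + 2) ≠ f n := by
    intro n
    rw [hf1 (n + 1), hgs n, hf]
    exact hstep2 (g n)
  set W : (n : ℕ) → B.Walk (f n) (f 0) := fun n =>
    Nat.rec (motive := fun n => B.Walk (f n) (f 0)) SimpleGraph.Walk.nil
      (fun n wn => SimpleGraph.Walk.cons ((hfadj n).symm) wn) n with hW
  have hWs : ∀ n, W (n + 1) = SimpleGraph.Walk.cons ((hfadj n).symm) (W n) := fun n => rfl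
  have hWlen : ∀ n, (W n).length = n := by
    intro n
    induction n with
    | zero => rfl
    | succ m IH => rw [hWs m, SimpleGraph.Walk.length_cons, IH]
  have hpath : ∀ n, (W n).IsPath := by
    intro n
    induction n with
    | zero => exact SimpleGraph.Walk.IsPath.nil
    | succ m IH =>
      rw [hWs m, SimpleGraph.Walk.cons_isPath_iff]
      refine ⟨IH, ?_⟩
      intro hmem
      cases m with
      | zero =>
        have h0 : f 1 = f 0 := (SimpleGraph.Walk.mem_support_nil_iff).1 hmem
        exact (hfadj 0).ne' h0
      | succ m' =>
        -- f (m' + 2) ∈ support of W (m' + 1)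
        set p := (W (m' + 1)).takeUntil (f (m' + 2)) hmem with hp
        have hppath : p.IsPath := IH.takeUntil hmem
        have hlen1 : p.length = 1 := by
          have hPuniq := SimpleGraph.isAcyclic_iff_path_unique.1 hacyc
            ⟨p.reverse, hppath.reverse⟩ (SimpleGraph.Path.singleton ((hfadj (m' + 1)).symm))
          have hval : p.reverse = (SimpleGraph.Path.singleton ((hfadj (m' + 1)).symm)).val :=
            congrArg Subtype.val hPuniq
          have : p.reverse.length = 1 := by rw [hval]; rfl
          rwa [SimpleGraph.Walk.length_reverse] at this
        have hspec := (W (m' + 1)).take_spec hmem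
        have hv1 : (W (m' + 1)).getVert 1 = f m' := by
          rw [hWs m', SimpleGraph.Walk.getVert_cons_succ]
          exact SimpleGraph.Walk.getVert_zero _
        have hv2 : (W (m' + 1)).getVert 1 = f (m' + 2) := by
          rw [← hspec, SimpleGraph.Walk.getVert_append, hlen1]
          rw [if_neg (by omega)]
          exact SimpleGraph.Walk.getVert_zero _
        exact hfnb m' (hv2.symm.trans hv1)
  have hfinal := (hpath (Fintype.card V)).length_lt
  rw [hWlen] at hfinal
  omega

end MGAux

namespace MGAux
open Multigraph Finset

variable {V : Type*} [Fintype V] [DecidableEq V]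

lemma locMult_ge (G : Multigraph V) (v u : V) : G.mu v u ≤ locMult G v :=
  Finset.le_sup (Finset.mem_univ u)

lemma deg_le_size (G : Multigraph V) (u v : V) : G.mu u v ≤ size G :=
  Finset.single_le_sum (f := fun p : V × V => G.mu p.1 p.2)
    (fun p _ => Nat.zero_le _) (Finset.mem_univ (u, v))

def trivCol (G : Multigraph V) (k : ℕ) (hE : ∀ u v, G.mu u v = 0) : Col G k where
  M _ _ _ := 0
  symm _ _ _ := rfl
  le_one _ _ _ := Nat.zero_le 1
  matching _ v := by simp
  total u v := by simp [hE u v]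

lemma main_col (k D : ℕ) (hDk : D ≤ k) (B : SimpleGraph V) (hacyc : B.IsAcyclic) :
    ∀ (G : Multigraph V), (∀ v, deg G v ≤ D) →
    (∀ u v, k < deg G u + locMult G u → k < deg G v + locMult G v →
      G.mu u v ≤ k - D + 1) →
    (∀ u v, k < deg G u + locMult G u → k < deg G v + locMult G v →
      G.mu u v = k - D + 1 → B.Adj u v) →
    Nonempty (Col G k) := by
  classical
  suffices h : ∀ (N : ℕ) (G : Multigraph V), size G ≤ N → (∀ v, deg G v ≤ D) →
      (∀ u v, k < deg G u + locMult G u → k < deg G v + locMult G v →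
        G.mu u v ≤ k - D + 1) →
      (∀ u v, k < deg G u + locMult G u → k < deg G v + locMult G v →
        G.mu u v = k - D + 1 → B.Adj u v) →
      Nonempty (Col G k) by
    intro G h1 h2 h3
    exact h (size G) G le_rfl h1 h2 h3
  intro N
  induction N with
  | zero =>
    intro G hsz h1 h2 h3
    refine ⟨trivCol G k ?_⟩
    intro u v
    have := deg_le_size G u v
    omega
  | succ N IH =>
    intro G hsz h1 h2 h3
    by_cases hE : ∀ u v, G.mu u v = 0
    · exact ⟨trivCol G k hE⟩
    · push_neg at hE
      obtain ⟨u₀, v₀, huv₀⟩ := hE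
      have hedge : ∃ u v, 1 ≤ G.mu u v := ⟨u₀, v₀, by omega⟩
      -- selection of a good centre x
      have hsel : ∃ x y, 1 ≤ G.mu x y ∧
          (∀ z₁ z₂ : V, 1 ≤ G.mu x z₁ → k + 1 ≤ deg G z₁ + G.mu x z₁ →
            1 ≤ G.mu x z₂ → k + 1 ≤ deg G z₂ + G.mu x z₂ → z₁ = z₂) ∧
          (∀ z, 1 ≤ G.mu x z → deg G z + G.mu x z ≤ k + 1) := by
        by_contra hno
        push_neg at hno
        -- every vertex with an edge is "bad"
        set C : Finset V := Finset.univ.filter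
          (fun v => (k < deg G v + locMult G v) ∧ ∃ u, 1 ≤ G.mu v u) with hC
        have hmemC : ∀ v, v ∈ C ↔ ((k < deg G v + locMult G v) ∧ ∃ u, 1 ≤ G.mu v u) := by
          intro v
          rw [hC]
          simp
        have hthrC : ∀ x z, 1 ≤ G.mu x z → k + 1 ≤ deg G z + G.mu x z → z ∈ C := by
          intro x z hmu hthr
          rw [hmemC]
          have hlm : G.mu x z ≤ locMult G z := by
            rw [G.symm]
            exact locMult_ge G z x
          refine ⟨by omega, ⟨x, by rwa [G.symm] at hmu⟩⟩
        have hbad : ∀ x, (∃ u, 1 ≤ G.mu x u) → x ∈ C →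
            ∃ z₁ z₂, z₁ ∈ C ∧ z₂ ∈ C ∧ z₁ ≠ z₂ ∧ B.Adj x z₁ ∧ B.Adj x z₂ := by
          intro x ⟨y, hy⟩ hxC
          have hxcore : k < deg G x + locMult G x := ((hmemC x).1 hxC).1
          have hnostrong : ∀ z, 1 ≤ G.mu x z → deg G z + G.mu x z ≤ k + 1 := by
            intro z hmu
            by_contra hcon
            push_neg at hcon
            have hzcore : k < deg G z + locMult G z := by
              have hlm : G.mu x z ≤ locMult G z := by
                rw [G.symm]; exact locMult_ge G z x
              have := h1 z
              omega
            have := h2 x z hxcore hzcore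
            have := h1 z
            omega
          obtain ⟨z₁, z₂, hne, hm1, ht1, hm2, ht2⟩ : ∃ z₁ z₂, z₁ ≠ z₂ ∧ (1 ≤ G.mu x z₁)
              ∧ (k + 1 ≤ deg G z₁ + G.mu x z₁) ∧ (1 ≤ G.mu x z₂)
              ∧ (k + 1 ≤ deg G z₂ + G.mu x z₂) := by
            by_cases hone' : ∀ z₁ z₂ : V, 1 ≤ G.mu x z₁ → k + 1 ≤ deg G z₁ + G.mu x z₁ →
                1 ≤ G.mu x z₂ → k + 1 ≤ deg G z₂ + G.mu x z₂ → z₁ = z₂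
            · obtain ⟨z, hmz, htz⟩ := hno x y hy hone'
              exact absurd (hnostrong z hmz) (by omega)
            · push_neg at hone'
              obtain ⟨z₁, z₂, hm1, ht1, hm2, ht2, hne⟩ := hone'
              exact ⟨z₁, z₂, hne, hm1, ht1, hm2, ht2⟩
          have hadj : ∀ z, 1 ≤ G.mu x z → k + 1 ≤ deg G z + G.mu x z → B.Adj x z := by
            intro z hm ht
            have hzC := hthrC x z hm ht
            have hzcore : k < deg G z + locMult G z := ((hmemC z).1 hzC).1
            apply h3 x z hxcore hzcore
            have hle := h2 x z hxcore hzcore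
            have := h1 z
            omega
          exact ⟨z₁, z₂, hthrC x z₁ hm1 ht1, hthrC x z₂ hm2 ht2, hne,
            hadj z₁ hm1 ht1, hadj z₂ hm2 ht2⟩
        have hCne : C.Nonempty := by
          obtain ⟨u, v, huv⟩ := hedge
          by_cases hone' : ∀ z₁ z₂ : V, 1 ≤ G.mu u z₁ → k + 1 ≤ deg G z₁ + G.mu u z₁ →
              1 ≤ G.mu u z₂ → k + 1 ≤ deg G z₂ + G.mu u z₂ → z₁ = z₂
          · obtain ⟨z, hmz, htz⟩ := hno u v huv hone'
            exact ⟨z, hthrC u z hmz (by omega)⟩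
          · push_neg at hone'
            obtain ⟨z₁, z₂, hm1, ht1, _, _, _⟩ := hone'
            exact ⟨z₁, hthrC u z₁ hm1 ht1⟩
        refine acyclic_no_min_two hacyc C hCne ?_
        intro x hxC
        exact hbad x ((hmemC x).1 hxC).2 hxC
      obtain ⟨x, y, hxy, hone, hstr⟩ := hsel
      -- delete the edge and colour by induction
      have hszd : size (del G x y) ≤ N := by
        have := size_del_lt G hxy
        omega
      have h1' : ∀ v, deg (del G x y) v ≤ D := fun v => le_trans (deg_del_le G x y v) (h1 v)
      have hcore' : ∀ v, k < deg (del G x y) v + locMult (del G x y) v →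
          k < deg G v + locMult G v := by
        intro v hv
        have := deg_del_le G x y v
        have := locMult_del_le G x y v
        omega
      have h2' : ∀ u v, k < deg (del G x y) u + locMult (del G x y) u →
          k < deg (del G x y) v + locMult (del G x y) v →
          (del G x y).mu u v ≤ k - D + 1 := by
        intro u v hu hv
        have := h2 u v (hcore' u hu) (hcore' v hv)
        have := mu_del_le G x y u v
        omega
      have h3' : ∀ u v, k < deg (del G x y) u + locMult (del G x y) u →
          k < deg (del G x y) v + locMult (del G x y) v →
          (del G x y).mu u v = k - D + 1 → B.Adj u v := by
        intro u v hu hv heq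
        apply h3 u v (hcore' u hu) (hcore' v hv)
        have := h2 u v (hcore' u hu) (hcore' v hv)
        have := mu_del_le G x y u v
        omega
      obtain ⟨φ⟩ := IH (del G x y) hszd h1' h2' h3'
      exact fan_main φ hxy (fun v => le_trans (h1 v) hDk) hone hstr

end MGAux


/-- Theorem (forest core): if the t-core H of G has multiplicity at most t+1 and the
simple graph of its multiplicity-(t+1) edges is acyclic, then χ'(G) ≤ Δ(G) + t. -/
theorem stmt0 {V : Type*} [Fintype V] (G : Multigraph V) (t : ℕ)
    (H : Multigraph V) (hH : H = G.tCore t)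
    (hmul : ∀ u v, H.mu u v ≤ t + 1)
    (B : SimpleGraph V) (hB : ∀ u v, B.Adj u v ↔ H.mu u v = t + 1)
    (hacyc : B.IsAcyclic) :
    G.chromaticIndex ≤ G.maxDeg + t := by
  classical
  set k := G.maxDeg + t with hk
  set D := G.maxDeg with hD
  have hdeg : ∀ v, Multigraph.deg G v ≤ D := fun v => Finset.le_sup (Finset.mem_univ v)
  have hkd : k - D = t := by omega
  have hHcore : ∀ u v, k < Multigraph.deg G u + Multigraph.locMult G u →
      k < Multigraph.deg G v + Multigraph.locMult G v → H.mu u v = G.mu u v := by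
    intro u v hu hv
    rw [hH]
    show (if _ ∧ _ then G.mu u v else 0) = G.mu u v
    rw [if_pos ⟨hu, hv⟩]
  have h2 : ∀ u v, k < Multigraph.deg G u + Multigraph.locMult G u →
      k < Multigraph.deg G v + Multigraph.locMult G v → G.mu u v ≤ k - D + 1 := by
    intro u v hu hv
    rw [hkd, ← hHcore u v hu hv]
    exact hmul u v
  have h3 : ∀ u v, k < Multigraph.deg G u + Multigraph.locMult G u →
      k < Multigraph.deg G v + Multigraph.locMult G v → G.mu u v = k - D + 1 →
      B.Adj u v := by
    intro u v hu hv heq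
    rw [hB]
    rw [hHcore u v hu hv, heq, hkd]
  obtain ⟨φ⟩ := MGAux.main_col k D (by omega) B hacyc G hdeg h2 h3
  apply Nat.sInf_le
  exact ⟨φ.M, φ.symm, φ.le_one, φ.matching, φ.total⟩
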